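/- Let n ≥ 1, let H be an n×n Hermitian complex matrix, and set σ = Matrix.exp H / Re (Matrix.trace (Matrix.exp H)). Then for every positive definite Hermitian n×n matrix ρ with trace 1, the quantum relative entropy satisfies the Gibbs variational principle: S(ρ‖σ) = sup { Re (Matrix.trace (ρ * A)) − Real.log (Re (Matrix.trace (Matrix.exp (H + A)))) : A an n×n Hermitian matrix } + Real.log (Re (Matrix.trace (Matrix.exp H))). (This is the finite-dimensional version of the paper's Theorem 2: S(φ_V‖ω_V) = sup_{A=A*} {β φ_V(A) − ln Tr e^{β(μN − Σ h_x + A)}} + V ln Tr e^{β(μ n₁ − h₁)}, with β absorbed into H and A.) -/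

import Mathlib

open scoped ComplexOrder

/-- The matrix logarithm of a Hermitian complex matrix, defined through the continuous
functional calculus: apply `Real.log` to the eigenvalues in a spectral decomposition
(junk value `0` for non-Hermitian matrices). -/
noncomputable def matLog {n : ℕ} (M : Matrix (Fin n) (Fin n) ℂ) :
    Matrix (Fin n) (Fin n) ℂ :=
  if hM : M.IsHermitian then
    (hM.eigenvectorUnitary : Matrix (Fin n) (Fin n) ℂ) *
      Matrix.diagonal (fun i => (Real.log (hM.eigenvalues i) : ℂ)) *
      star (hM.eigenvectorUnitary : Matrix (Fin n) (Fin n) ℂ)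
  else 0

/-- The quantum relative entropy `S(ρ‖σ) = Re (Tr (ρ (log ρ − log σ)))` of two density
matrices. -/
noncomputable def relEnt {n : ℕ} (ρ σ : Matrix (Fin n) (Fin n) ℂ) : ℝ :=
  (Matrix.trace (ρ * (matLog ρ - matLog σ))).re

namespace GibbsAux

open Matrix Polynomial Finset

variable {n : ℕ}

lemma aeval_diagonal' (d : Fin n → ℂ) (q : ℂ[X]) :
    aeval (Matrix.diagonal d) q = Matrix.diagonal (fun i => aeval (d i) q) := by
  have h1 := aeval_algHom_apply (Matrix.diagonalAlgHom (n := Fin n) (α := ℂ) ℂ) d q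
  simp only [Matrix.diagonalAlgHom_apply] at h1
  rw [h1]
  exact congrArg Matrix.diagonal
    (funext fun i => (aeval_algHom_apply (Pi.evalAlgHom ℂ (fun _ => ℂ) i) d q).symm)

/-- Conjugation by a unitary matrix, as an algebra homomorphism. -/
noncomputable def conjAH (U : Matrix (Fin n) (Fin n) ℂ)
    (hU : U ∈ Matrix.unitaryGroup (Fin n) ℂ) :
    Matrix (Fin n) (Fin n) ℂ →ₐ[ℂ] Matrix (Fin n) (Fin n) ℂ where
  toFun X := U * X * star U
  map_one' := by
    show U * 1 * star U = 1
    rw [mul_one]; exact Matrix.mem_unitaryGroup_iff.mp hU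
  map_mul' X Y := by
    have h : star U * U = 1 := Matrix.mem_unitaryGroup_iff'.mp hU
    show U * (X * Y) * star U = (U * X * star U) * (U * Y * star U)
    calc U * (X * Y) * star U = U * X * (star U * U) * Y * star U := by rw [h]; noncomm_ring
      _ = (U * X * star U) * (U * Y * star U) := by noncomm_ring
  map_zero' := by simp
  map_add' X Y := by show U * (X + Y) * star U = _ ; noncomm_ring
  commutes' c := by
    have h : U * star U = 1 := Matrix.mem_unitaryGroup_iff.mp hU
    show U * algebraMap ℂ _ c * star U = _
    rw [Algebra.algebraMap_eq_smul_one, mul_smul_comm, smul_mul_assoc, mul_one, h]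

lemma aeval_unitary_conj' {U : Matrix (Fin n) (Fin n) ℂ}
    (hU : U ∈ Matrix.unitaryGroup (Fin n) ℂ) (D : Matrix (Fin n) (Fin n) ℂ) (q : ℂ[X]) :
    aeval (U * D * star U) q = U * aeval D q * star U := by
  have := aeval_algHom_apply (conjAH U hU) D q
  simpa [conjAH] using this

/-- Two unitary diagonalizations of the same Hermitian matrix yield the same result when a
function is applied to the diagonal entries (proved via Lagrange interpolation). -/
lemma conj_diag_eq_conj_diag {U V : Matrix (Fin n) (Fin n) ℂ}
    (hU : U ∈ Matrix.unitaryGroup (Fin n) ℂ) (hV : V ∈ Matrix.unitaryGroup (Fin n) ℂ)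
    {d e : Fin n → ℝ}
    (h : U * Matrix.diagonal (fun i => (d i : ℂ)) * star U
       = V * Matrix.diagonal (fun i => (e i : ℂ)) * star V) (f : ℝ → ℝ) :
    U * Matrix.diagonal (fun i => (f (d i) : ℂ)) * star U
      = V * Matrix.diagonal (fun i => (f (e i) : ℂ)) * star V := by
  classical
  set s : Finset ℝ := Finset.image d Finset.univ ∪ Finset.image e Finset.univ with hs
  set p : ℝ[X] := Lagrange.interpolate s id f with hpdef
  have hp : ∀ x ∈ s, p.eval x = f x := by
    intro x hx
    exact Lagrange.eval_interpolate_at_node f (Set.injOn_id _) hx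
  set q : ℂ[X] := p.map (algebraMap ℝ ℂ) with hqdef
  have hq : ∀ x ∈ s, aeval ((x : ℂ)) q = ((f x : ℝ) : ℂ) := by
    intro x hx
    rw [Polynomial.coe_aeval_eq_eval, hqdef, Polynomial.eval_map,
      show ((x : ℂ)) = algebraMap ℝ ℂ x from rfl, Polynomial.eval₂_hom, hp x hx]
    rfl
  have key : ∀ (W : Matrix (Fin n) (Fin n) ℂ), W ∈ Matrix.unitaryGroup (Fin n) ℂ →
      ∀ (g : Fin n → ℝ), (∀ i, g i ∈ s) →
      aeval (W * Matrix.diagonal (fun i => (g i : ℂ)) * star W) q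
        = W * Matrix.diagonal (fun i => (f (g i) : ℂ)) * star W := by
    intro W hW g hg
    rw [aeval_unitary_conj' hW, aeval_diagonal']
    exact congrArg (fun D => W * D * star W)
      (congrArg Matrix.diagonal (funext fun i => hq (g i) (hg i)))
  have hd : ∀ i, d i ∈ s := fun i =>
    Finset.mem_union_left _ (Finset.mem_image_of_mem d (Finset.mem_univ i))
  have he : ∀ i, e i ∈ s := fun i =>
    Finset.mem_union_right _ (Finset.mem_image_of_mem e (Finset.mem_univ i))
  calc U * Matrix.diagonal (fun i => (f (d i) : ℂ)) * star U
      = aeval (U * Matrix.diagonal (fun i => (d i : ℂ)) * star U) q := (key U hU d hd).symm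
    _ = aeval (V * Matrix.diagonal (fun i => (e i : ℂ)) * star V) q := by rw [h]
    _ = V * Matrix.diagonal (fun i => (f (e i) : ℂ)) * star V := key V hV e he

lemma isHermitian_conj_diag' {U : Matrix (Fin n) (Fin n) ℂ}
    (hU : U ∈ Matrix.unitaryGroup (Fin n) ℂ) (d : Fin n → ℝ) :
    (U * Matrix.diagonal (fun i => (d i : ℂ)) * star U).IsHermitian := by
  have : star (U * Matrix.diagonal (fun i => (d i : ℂ)) * star U)
      = U * Matrix.diagonal (fun i => (d i : ℂ)) * star U := by
    simp only [Matrix.star_mul, star_star, ← mul_assoc]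
    congr 1
    congr 1
    rw [Matrix.star_eq_conjTranspose, Matrix.diagonal_conjTranspose]
    congr 1
    funext i
    simp [Pi.star_def]
  simpa [Matrix.IsHermitian, Matrix.star_eq_conjTranspose] using this

lemma trace_conj_diag' {U : Matrix (Fin n) (Fin n) ℂ}
    (hU : U ∈ Matrix.unitaryGroup (Fin n) ℂ) (v : Fin n → ℂ) :
    Matrix.trace (U * Matrix.diagonal v * star U) = ∑ i, v i := by
  rw [Matrix.trace_mul_cycle, Matrix.mem_unitaryGroup_iff'.mp hU, one_mul,
    Matrix.trace_diagonal]

lemma conj_mul_conj' {U : Matrix (Fin n) (Fin n) ℂ}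
    (hU : U ∈ Matrix.unitaryGroup (Fin n) ℂ) (D E : Matrix (Fin n) (Fin n) ℂ) :
    (U * D * star U) * (U * E * star U) = U * (D * E) * star U := by
  have h : star U * U = 1 := Matrix.mem_unitaryGroup_iff'.mp hU
  calc (U * D * star U) * (U * E * star U) = U * D * (star U * U) * E * star U := by
        noncomm_ring
    _ = U * (D * E) * star U := by rw [h]; noncomm_ring

lemma spectral' {M : Matrix (Fin n) (Fin n) ℂ} (hM : M.IsHermitian) :
    M = (hM.eigenvectorUnitary : Matrix (Fin n) (Fin n) ℂ) *
      Matrix.diagonal (fun i => ((hM.eigenvalues i : ℝ) : ℂ)) *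
      star (hM.eigenvectorUnitary : Matrix (Fin n) (Fin n) ℂ) := by
  convert hM.spectral_theorem using 3
  rw [Unitary.conjStarAlgAut_apply]; rfl

lemma eigUnitary_mem {M : Matrix (Fin n) (Fin n) ℂ} (hM : M.IsHermitian) :
    (hM.eigenvectorUnitary : Matrix (Fin n) (Fin n) ℂ) ∈ Matrix.unitaryGroup (Fin n) ℂ :=
  (hM.eigenvectorUnitary).2

lemma matLog_of_isHermitian {M : Matrix (Fin n) (Fin n) ℂ} (hM : M.IsHermitian) :
    matLog M = (hM.eigenvectorUnitary : Matrix (Fin n) (Fin n) ℂ) *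
      Matrix.diagonal (fun i => (Real.log (hM.eigenvalues i) : ℂ)) *
      star (hM.eigenvectorUnitary : Matrix (Fin n) (Fin n) ℂ) := by
  rw [matLog, dif_pos hM]

lemma matLog_conj {U : Matrix (Fin n) (Fin n) ℂ}
    (hU : U ∈ Matrix.unitaryGroup (Fin n) ℂ) (d : Fin n → ℝ) :
    matLog (U * Matrix.diagonal (fun i => (d i : ℂ)) * star U)
      = U * Matrix.diagonal (fun i => (Real.log (d i) : ℂ)) * star U := by
  set M := U * Matrix.diagonal (fun i => (d i : ℂ)) * star U with hMdef
  have hM : M.IsHermitian := isHermitian_conj_diag' hU d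
  rw [matLog_of_isHermitian hM]
  have hspec : (hM.eigenvectorUnitary : Matrix (Fin n) (Fin n) ℂ) *
      Matrix.diagonal (fun i => ((hM.eigenvalues i : ℝ) : ℂ)) *
      star (hM.eigenvectorUnitary : Matrix (Fin n) (Fin n) ℂ)
      = U * Matrix.diagonal (fun i => (d i : ℂ)) * star U := (spectral' hM).symm
  exact conj_diag_eq_conj_diag (eigUnitary_mem hM) hU hspec Real.log

lemma exp_conj_diag {U : Matrix (Fin n) (Fin n) ℂ}
    (hU : U ∈ Matrix.unitaryGroup (Fin n) ℂ) (d : Fin n → ℝ) :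
    NormedSpace.exp (U * Matrix.diagonal (fun i => (d i : ℂ)) * star U)
      = U * Matrix.diagonal (fun i => (Real.exp (d i) : ℂ)) * star U := by
  have hUnit : IsUnit U :=
    ⟨⟨U, star U, Matrix.mem_unitaryGroup_iff.mp hU, Matrix.mem_unitaryGroup_iff'.mp hU⟩, rfl⟩
  have hinv : U⁻¹ = star U := Matrix.inv_eq_left_inv (Matrix.mem_unitaryGroup_iff'.mp hU)
  have h2 := Matrix.exp_conj U (Matrix.diagonal (fun i => (d i : ℂ))) hUnit
  rw [← hinv]
  rw [h2, Matrix.exp_diagonal, hinv]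
  refine congrArg (fun D => U * D * star U) ?_
  rw [Pi.exp_def]
  exact congrArg Matrix.diagonal
    (funext fun i => by rw [← Complex.exp_eq_exp_ℂ, Complex.ofReal_exp])

lemma conj_diag_sub_smul_one {U : Matrix (Fin n) (Fin n) ℂ}
    (hU : U ∈ Matrix.unitaryGroup (Fin n) ℂ) (d : Fin n → ℝ) (c : ℝ) :
    U * Matrix.diagonal (fun i => ((d i - c : ℝ) : ℂ)) * star U
      = U * Matrix.diagonal (fun i => (d i : ℂ)) * star U - (c : ℂ) • 1 := by
  have h1 : ((c : ℂ)) • (1 : Matrix (Fin n) (Fin n) ℂ)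
      = U * ((c : ℂ) • 1) * star U := by
    rw [mul_smul_comm, mul_one, smul_mul_assoc, Matrix.mem_unitaryGroup_iff.mp hU]
  rw [h1, ← Matrix.sub_mul, ← Matrix.mul_sub]
  refine congrArg (fun D => U * D * star U) ?_
  have : ((c : ℂ)) • (1 : Matrix (Fin n) (Fin n) ℂ)
      = Matrix.diagonal (fun _ => (c : ℂ)) := by
    rw [← Matrix.diagonal_one, ← Matrix.diagonal_smul]
    exact congrArg Matrix.diagonal (funext fun i => by simp)
  rw [this, Matrix.diagonal_sub]
  exact congrArg Matrix.diagonal (funext fun i => by push_cast; ring)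

lemma klein_real {m : ℕ} (p q : Fin m → ℝ) (c : Fin m → Fin m → ℝ)
    (hp : ∀ i, 0 < p i) (hq : ∀ j, 0 < q j) (hc : ∀ i j, 0 ≤ c i j)
    (hrow : ∀ i, ∑ j, c i j = 1) (hcol : ∀ j, ∑ i, c i j = 1)
    (hp1 : ∑ i, p i = 1) (hq1 : ∑ j, q j = 1) :
    ∑ i, ∑ j, p i * Real.log (q j) * c i j ≤ ∑ i, p i * Real.log (p i) := by
  set r : Fin m → ℝ := fun i => ∑ j, c i j * q j with hrdef
  have hr : ∀ i, 0 < r i := by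
    intro i
    have hne : ∃ j ∈ Finset.univ, c i j ≠ 0 := by
      by_contra hcon
      push_neg at hcon
      have : ∑ j, c i j = 0 := Finset.sum_eq_zero fun j hj => hcon j hj
      rw [hrow i] at this; norm_num at this
    obtain ⟨j, hj, hcj⟩ := hne
    refine Finset.sum_pos' (fun k _ => mul_nonneg (hc i k) (hq k).le) ⟨j, hj, ?_⟩
    exact mul_pos (lt_of_le_of_ne (hc i j) (Ne.symm hcj)) (hq j)
  have hsumr : ∑ i, r i = 1 := by
    rw [hrdef]
    simp only
    rw [Finset.sum_comm]
    calc ∑ j, ∑ i, c i j * q j = ∑ j, (∑ i, c i j) * q j := by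
          simp [Finset.sum_mul]
      _ = ∑ j, q j := by simp [hcol]
      _ = 1 := hq1
  have jensen : ∀ i, ∑ j, c i j * Real.log (q j) ≤ Real.log (r i) := by
    intro i
    have := (strictConcaveOn_log_Ioi.concaveOn).le_map_sum
      (t := Finset.univ) (w := fun j => c i j) (p := fun j => q j)
      (fun j _ => hc i j) (hrow i) (fun j _ => hq j)
    simpa [smul_eq_mul] using this
  have step2 : ∑ i, p i * Real.log (r i) ≤ ∑ i, p i * Real.log (p i) := by
    have key : ∀ i, p i * Real.log (r i) - p i * Real.log (p i) ≤ r i - p i := by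
      intro i
      have h1 : Real.log (r i / p i) ≤ r i / p i - 1 :=
        Real.log_le_sub_one_of_pos (div_pos (hr i) (hp i))
      have h2 : Real.log (r i / p i) = Real.log (r i) - Real.log (p i) :=
        Real.log_div (hr i).ne' (hp i).ne'
      have h3 := mul_le_mul_of_nonneg_left h1 (hp i).le
      rw [h2] at h3
      calc p i * Real.log (r i) - p i * Real.log (p i)
          = p i * (Real.log (r i) - Real.log (p i)) := by ring
        _ ≤ p i * (r i / p i - 1) := h3
        _ = r i - p i := by rw [mul_sub, mul_div_cancel₀ _ (hp i).ne', mul_one]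
    have := Finset.sum_le_sum (fun i (_ : i ∈ Finset.univ) => key i)
    rw [Finset.sum_sub_distrib, Finset.sum_sub_distrib, hsumr, hp1] at this
    linarith
  calc ∑ i, ∑ j, p i * Real.log (q j) * c i j
      = ∑ i, p i * ∑ j, c i j * Real.log (q j) := by
        congr 1; funext i; rw [Finset.mul_sum]; congr 1; funext j; ring
    _ ≤ ∑ i, p i * Real.log (r i) := by
        refine Finset.sum_le_sum fun i _ => ?_
        exact mul_le_mul_of_nonneg_left (jensen i) (hp i).le
    _ ≤ ∑ i, p i * Real.log (p i) := step2

lemma trace_cross {U V : Matrix (Fin n) (Fin n) ℂ}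
    (hU : U ∈ Matrix.unitaryGroup (Fin n) ℂ) (hV : V ∈ Matrix.unitaryGroup (Fin n) ℂ)
    (p q : Fin n → ℝ) :
    (Matrix.trace ((U * Matrix.diagonal (fun i => (p i : ℂ)) * star U)
        * (V * Matrix.diagonal (fun j => (q j : ℂ)) * star V))).re
      = ∑ i, ∑ j, p i * q j * Complex.normSq ((star U * V) i j) := by
  set P := Matrix.diagonal (fun i => (p i : ℂ)) with hP
  set Q := Matrix.diagonal (fun j => (q j : ℂ)) with hQ
  set W := star U * V with hW
  have hsW : star W = star V * U := by rw [hW, Matrix.star_mul, star_star]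
  have h1 : Matrix.trace ((U * P * star U) * (V * Q * star V))
      = Matrix.trace (P * (W * Q * star W)) := by
    rw [hsW, hW]
    rw [show (U * P * star U) * (V * Q * star V)
        = U * (P * (star U * V * Q * (star V * U))) * star U by
      simp only [Matrix.mul_assoc, Matrix.mem_unitaryGroup_iff.mp hU, Matrix.mul_one]]
    rw [Matrix.trace_mul_cycle, ← Matrix.mul_assoc, Matrix.mem_unitaryGroup_iff'.mp hU,
      Matrix.one_mul]
  rw [h1, Matrix.trace]
  have h2 : ∀ i, (P * (W * Q * star W)).diag i
      = ∑ j, ((p i * q j * Complex.normSq (W i j) : ℝ) : ℂ) := by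
    intro i
    rw [Matrix.diag_apply,
      show (P * (W * Q * star W)) i i = ((p i : ℂ)) * (W * Q * star W) i i from by
        rw [hP, Matrix.diagonal_mul],
      show (W * Q * star W) i i = ∑ j, (W * Q) i j * (star W) j i from Matrix.mul_apply,
      Finset.mul_sum]
    refine Finset.sum_congr rfl fun j _ => ?_
    rw [show (W * Q) i j = W i j * ((q j : ℂ)) from by rw [hQ, Matrix.mul_diagonal],
      Matrix.star_apply]
    rw [show ((p i : ℂ)) * (W i j * (q j : ℂ) * star (W i j))
        = ((p i : ℂ)) * ((q j : ℂ)) * (W i j * star (W i j)) by ring]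
    rw [Complex.star_def, Complex.mul_conj]
    push_cast
    ring
  rw [Finset.sum_congr rfl (fun i _ => h2 i), Complex.re_sum]
  congr 1
  funext i
  rw [Complex.re_sum]
  simp

lemma sum_eigenvalues_eq_one {ρ : Matrix (Fin n) (Fin n) ℂ} (hρ : ρ.IsHermitian)
    (hρtr : Matrix.trace ρ = 1) : ∑ i, hρ.eigenvalues i = 1 := by
  have h := congrArg Matrix.trace (spectral' hρ)
  rw [hρtr, trace_conj_diag' (eigUnitary_mem hρ)] at h
  have := congrArg Complex.re h
  rw [Complex.one_re, Complex.re_sum] at this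
  simpa using this.symm

lemma trace_mul_matLog_self {ρ : Matrix (Fin n) (Fin n) ℂ} (hρ : ρ.IsHermitian) :
    (Matrix.trace (ρ * matLog ρ)).re = ∑ i, hρ.eigenvalues i * Real.log (hρ.eigenvalues i) := by
  have hU := eigUnitary_mem hρ
  rw [matLog_of_isHermitian hρ]
  nth_rewrite 1 [spectral' hρ]
  rw [conj_mul_conj' hU, Matrix.diagonal_mul_diagonal, trace_conj_diag' hU, Complex.re_sum]
  refine Finset.sum_congr rfl fun i _ => ?_
  rw [← Complex.ofReal_mul]
  exact Complex.ofReal_re _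

/-- Klein's inequality, core form. -/
lemma klein_matrix {ρ : Matrix (Fin n) (Fin n) ℂ} (hρ : ρ.PosDef) (hρtr : Matrix.trace ρ = 1)
    {V : Matrix (Fin n) (Fin n) ℂ} (hV : V ∈ Matrix.unitaryGroup (Fin n) ℂ)
    (q : Fin n → ℝ) (hq : ∀ j, 0 < q j) (hq1 : ∑ j, q j = 1) :
    (Matrix.trace (ρ * (V * Matrix.diagonal (fun j => (Real.log (q j) : ℂ)) * star V))).re
      ≤ (Matrix.trace (ρ * matLog ρ)).re := by
  have hρH : ρ.IsHermitian := hρ.1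
  have hU := eigUnitary_mem hρH
  set U : Matrix (Fin n) (Fin n) ℂ := (hρH.eigenvectorUnitary : Matrix (Fin n) (Fin n) ℂ)
  set pp := hρH.eigenvalues with hpp
  set W := star U * V with hW
  have hWW : W * star W = 1 := by
    rw [hW, Matrix.star_mul, star_star]
    rw [show star U * V * (star V * U) = star U * (V * star V) * U by simp only [Matrix.mul_assoc],
      Matrix.mem_unitaryGroup_iff.mp hV, Matrix.mul_one, Matrix.mem_unitaryGroup_iff'.mp hU]
  have hWW' : star W * W = 1 := by
    rw [hW, Matrix.star_mul, star_star]
    rw [show star V * U * (star U * V) = star V * (U * star U) * V by simp only [Matrix.mul_assoc],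
      Matrix.mem_unitaryGroup_iff.mp hU, Matrix.mul_one, Matrix.mem_unitaryGroup_iff'.mp hV]
  have hrow : ∀ i, ∑ j, Complex.normSq (W i j) = 1 := by
    intro i
    have h := congrArg (fun M => (M i i).re) hWW
    simp only [Matrix.mul_apply, Matrix.one_apply_eq, Complex.one_re, Matrix.star_apply] at h
    rw [← h, Complex.re_sum]
    refine Finset.sum_congr rfl fun j _ => ?_
    rw [Complex.star_def, Complex.mul_conj, Complex.ofReal_re]
  have hcol : ∀ j, ∑ i, Complex.normSq (W i j) = 1 := by
    intro j
    have h := congrArg (fun M => (M j j).re) hWW'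
    simp only [Matrix.mul_apply, Matrix.one_apply_eq, Complex.one_re, Matrix.star_apply] at h
    rw [← h, Complex.re_sum]
    refine Finset.sum_congr rfl fun i _ => ?_
    rw [Complex.star_def, mul_comm, Complex.mul_conj, Complex.ofReal_re]
  have hLHS : (Matrix.trace (ρ * (V * Matrix.diagonal (fun j => (Real.log (q j) : ℂ))
        * star V))).re
      = ∑ i, ∑ j, pp i * Real.log (q j) * Complex.normSq (W i j) := by
    nth_rewrite 1 [spectral' hρH]
    exact trace_cross hU hV pp (fun j => Real.log (q j))
  rw [hLHS, trace_mul_matLog_self hρH]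
  exact klein_real pp q (fun i j => Complex.normSq (W i j))
    (fun i => hρ.eigenvalues_pos i) hq (fun i j => Complex.normSq_nonneg _)
    hrow hcol (sum_eigenvalues_eq_one hρH hρtr) hq1

end GibbsAux

/-- **Gibbs variational principle for the quantum relative entropy** (the
finite-dimensional version of Theorem 2): for a Hermitian `H`, the Gibbs state
`σ = exp H / Re (Tr (exp H))` and any positive definite density matrix `ρ`,
`S(ρ‖σ) = sup_{A = A*} { Re (Tr (ρ A)) − log (Re (Tr (exp (H + A)))) } + log (Re (Tr (exp H)))`. -/
theorem relEnt_gibbs_variational {n : ℕ} (hn : 1 ≤ n)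
    (H : Matrix (Fin n) (Fin n) ℂ) (hH : H.IsHermitian)
    (σ : Matrix (Fin n) (Fin n) ℂ)
    (hσ : σ = ((Matrix.trace (NormedSpace.exp H)).re)⁻¹ • NormedSpace.exp H)
    (ρ : Matrix (Fin n) (Fin n) ℂ) (hρ : ρ.PosDef) (hρtr : Matrix.trace ρ = 1) :
    relEnt ρ σ =
      sSup {x : ℝ | ∃ A : Matrix (Fin n) (Fin n) ℂ, A.IsHermitian ∧
          x = (Matrix.trace (ρ * A)).re
            - Real.log ((Matrix.trace (NormedSpace.exp (H + A))).re)}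
        + Real.log ((Matrix.trace (NormedSpace.exp H)).re) := by
  classical
  have hne : Nonempty (Fin n) := ⟨⟨0, hn⟩⟩
  -- trace of the exponential of a Hermitian matrix
  have expFacts : ∀ (B : Matrix (Fin n) (Fin n) ℂ) (hB : B.IsHermitian),
      (Matrix.trace (NormedSpace.exp B)).re = ∑ i, Real.exp (hB.eigenvalues i) := by
    intro B hB
    have hW := GibbsAux.eigUnitary_mem hB
    have h1 : NormedSpace.exp B
        = (hB.eigenvectorUnitary : Matrix (Fin n) (Fin n) ℂ) *
          Matrix.diagonal (fun i => ((Real.exp (hB.eigenvalues i) : ℝ) : ℂ)) *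
          star (hB.eigenvectorUnitary : Matrix (Fin n) (Fin n) ℂ) := by
      conv_lhs => rw [GibbsAux.spectral' hB]
      exact GibbsAux.exp_conj_diag hW _
    rw [h1, GibbsAux.trace_conj_diag' hW, Complex.re_sum]
    exact Finset.sum_congr rfl fun i _ => Complex.ofReal_re _
  -- trace of ρ * (B - c • 1)
  have htrshift : ∀ (B : Matrix (Fin n) (Fin n) ℂ) (c : ℝ),
      (Matrix.trace (ρ * (B - ((c : ℝ) : ℂ) • 1))).re
        = (Matrix.trace (ρ * B)).re - c := by
    intro B c
    rw [Matrix.mul_sub, Matrix.trace_sub, Complex.sub_re, mul_smul_comm, mul_one,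
      Matrix.trace_smul, hρtr, smul_eq_mul, mul_one, Complex.ofReal_re]
  -- the key upper bound, from Klein's inequality
  have keyIneq : ∀ (B : Matrix (Fin n) (Fin n) ℂ), B.IsHermitian →
      (Matrix.trace (ρ * B)).re - Real.log ((Matrix.trace (NormedSpace.exp B)).re)
        ≤ (Matrix.trace (ρ * matLog ρ)).re := by
    intro B hB
    have hW := GibbsAux.eigUnitary_mem hB
    set W : Matrix (Fin n) (Fin n) ℂ := (hB.eigenvectorUnitary : Matrix (Fin n) (Fin n) ℂ)
    set b := hB.eigenvalues with hb
    set Z : ℝ := ∑ i, Real.exp (b i) with hZ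
    have hZpos : 0 < Z := Finset.sum_pos (fun i _ => Real.exp_pos _) Finset.univ_nonempty
    have hq : ∀ j, 0 < Real.exp (b j) / Z := fun j => div_pos (Real.exp_pos _) hZpos
    have hq1 : ∑ j, Real.exp (b j) / Z = 1 := by
      rw [← Finset.sum_div, ← hZ, div_self hZpos.ne']
    have hKlein := GibbsAux.klein_matrix hρ hρtr hW (fun j => Real.exp (b j) / Z) hq hq1
    have hfun : (fun j => ((Real.log (Real.exp (b j) / Z) : ℝ) : ℂ))
        = fun j => ((b j - Real.log Z : ℝ) : ℂ) := funext fun j => by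
      rw [Real.log_div (Real.exp_ne_zero _) hZpos.ne', Real.log_exp]
    rw [hfun, GibbsAux.conj_diag_sub_smul_one hW b (Real.log Z)] at hKlein
    rw [← GibbsAux.spectral' hB] at hKlein
    rw [htrshift B (Real.log Z)] at hKlein
    rw [expFacts B hB, ← hb, ← hZ]
    linarith
  -- data for ρ
  have hρH : ρ.IsHermitian := hρ.1
  have hU := GibbsAux.eigUnitary_mem hρH
  set U : Matrix (Fin n) (Fin n) ℂ := (hρH.eigenvectorUnitary : Matrix (Fin n) (Fin n) ℂ)
  set pp := hρH.eigenvalues with hpp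
  have hmatLogρ : matLog ρ
      = U * Matrix.diagonal (fun i => (Real.log (pp i) : ℂ)) * star U :=
    GibbsAux.matLog_of_isHermitian hρH
  have hlogHerm : (matLog ρ).IsHermitian := by
    rw [hmatLogρ]; exact GibbsAux.isHermitian_conj_diag' hU _
  have hexplog : NormedSpace.exp (matLog ρ) = ρ := by
    rw [hmatLogρ, GibbsAux.exp_conj_diag hU]
    conv_rhs => rw [GibbsAux.spectral' hρH]
    exact congrArg (fun D => U * D * star U)
      (congrArg Matrix.diagonal
        (funext fun i => by rw [Real.exp_log (hρ.eigenvalues_pos i)]))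
  set v : ℝ := (Matrix.trace (ρ * matLog ρ)).re - (Matrix.trace (ρ * H)).re with hv
  set S : Set ℝ := {x : ℝ | ∃ A : Matrix (Fin n) (Fin n) ℂ, A.IsHermitian ∧
      x = (Matrix.trace (ρ * A)).re
        - Real.log ((Matrix.trace (NormedSpace.exp (H + A))).re)} with hS
  have hmem : v ∈ S := by
    refine ⟨matLog ρ - H, hlogHerm.sub hH, ?_⟩
    have hHA : H + (matLog ρ - H) = matLog ρ := by abel
    rw [hHA, hexplog, hρtr, Matrix.mul_sub, Matrix.trace_sub, Complex.sub_re]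
    norm_num
    exact hv
  have hbdd : ∀ x ∈ S, x ≤ v := by
    rintro x ⟨A, hA, rfl⟩
    have hkey := keyIneq (H + A) (hH.add hA)
    have htrHA : (Matrix.trace (ρ * (H + A))).re
        = (Matrix.trace (ρ * H)).re + (Matrix.trace (ρ * A)).re := by
      rw [Matrix.mul_add, Matrix.trace_add, Complex.add_re]
    rw [htrHA] at hkey
    rw [hv]
    linarith
  have hsup : sSup S = v := IsGreatest.csSup_eq ⟨hmem, hbdd⟩
  -- the Gibbs state σ
  set Z : ℝ := (Matrix.trace (NormedSpace.exp H)).re with hZdef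
  have hZval : Z = ∑ i, Real.exp (hH.eigenvalues i) := expFacts H hH
  have hZpos : 0 < Z := by
    rw [hZval]; exact Finset.sum_pos (fun i _ => Real.exp_pos _) Finset.univ_nonempty
  have hUH := GibbsAux.eigUnitary_mem hH
  set UH : Matrix (Fin n) (Fin n) ℂ := (hH.eigenvectorUnitary : Matrix (Fin n) (Fin n) ℂ)
  set hh := hH.eigenvalues with hhh
  have hσdiag : σ = UH * Matrix.diagonal (fun i => ((Z⁻¹ * Real.exp (hh i) : ℝ) : ℂ)) * star UH := by
    rw [hσ]
    have h1 : NormedSpace.exp H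
        = UH * Matrix.diagonal (fun i => ((Real.exp (hh i) : ℝ) : ℂ)) * star UH := by
      conv_lhs => rw [GibbsAux.spectral' hH]
      exact GibbsAux.exp_conj_diag hUH _
    rw [h1, ← Matrix.smul_mul, ← Matrix.mul_smul]
    refine congrArg (fun D => UH * D * star UH) ?_
    rw [← Matrix.diagonal_smul]
    exact congrArg Matrix.diagonal (funext fun i => by
      rw [Pi.smul_apply, Complex.real_smul, Complex.ofReal_mul])
  have hmatLogσ : matLog σ = H - ((Real.log Z : ℝ) : ℂ) • 1 := by
    rw [hσdiag, GibbsAux.matLog_conj hUH]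
    have hfun : (fun i => ((Real.log (Z⁻¹ * Real.exp (hh i)) : ℝ) : ℂ))
        = fun i => ((hh i - Real.log Z : ℝ) : ℂ) := funext fun i => by
      rw [Real.log_mul (inv_ne_zero hZpos.ne') (Real.exp_ne_zero _), Real.log_inv,
        Real.log_exp]
      ring_nf
    rw [hfun, GibbsAux.conj_diag_sub_smul_one hUH hh (Real.log Z), ← GibbsAux.spectral' hH]
  -- conclusion
  have hrel : relEnt ρ σ = v + Real.log Z := by
    rw [relEnt, Matrix.mul_sub, Matrix.trace_sub, Complex.sub_re, hmatLogσ]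
    have := htrshift H (Real.log Z)
    rw [this, hv]
    ring
  rw [hrel, hsup, hZdef]
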